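/- Let λ₁ = σ̂²/(2(m₂ − m₁²)), S(x) = λ₁ ∫_{x₁}^{x} (m₁ − z) π(z) dz, and φ₁(x) = (x − m₁)/√(m₂ − m₁²). Then the function x ↦ S(x) φ₁′(x) is differentiable on (x₁, x₂) and φ₁ solves the Sturm–Liouville eigenvalue equation associated with the optimal diffusion: (d/dx)[S(x) φ₁′(x)] + λ₁ π(x) φ₁(x) = 0 for every x ∈ (x₁, x₂). -/

import Mathlib

open MeasureTheory Set Filter

/-- With `λ₁ = σ̂²/(2(m₂ - m₁²))`, `S(x) = λ₁ ∫_{x₁}^{x} (m₁ - z) π(z) dz`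
(the lower limit `x₁` is expressed via `Iio x` since `π` vanishes below `x₁`) and
`φ₁(x) = (x - m₁)/√(m₂ - m₁²)`, the function `x ↦ S(x) φ₁'(x)` is differentiable on
`(x₁, x₂)` and `φ₁` solves the Sturm–Liouville equation
`(d/dx)[S φ₁'] + λ₁ π φ₁ = 0` there. -/
theorem statement3
    (x₁ x₂ : EReal) (hx : x₁ < x₂)
    (I : Set ℝ) (hI : I = {x : ℝ | x₁ < (x : EReal) ∧ (x : EReal) < x₂})
    (ρ : ℝ → ℝ)
    (hρcont : ContinuousOn ρ I)
    (hρpos : ∀ x ∈ I, 0 < ρ x)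
    (hρzero : ∀ x ∉ I, ρ x = 0)
    (hρint : Integrable ρ)
    (hρnorm : (∫ x, ρ x) = 1)
    (hint1 : Integrable fun x => x * ρ x)
    (hint2 : Integrable fun x => x ^ 2 * ρ x)
    (m₁ m₂ : ℝ)
    (hm₁ : m₁ = ∫ x, x * ρ x)
    (hm₂ : m₂ = ∫ x, x ^ 2 * ρ x)
    (hvar : 0 < m₂ - m₁ ^ 2)
    (avg : ℝ) (havgpos : 0 < avg)
    (lam : ℝ) (hlam : lam = avg / (m₂ - m₁ ^ 2))
    (S : ℝ → ℝ) (hS : ∀ x, S x = lam * ∫ z in Set.Iio x, (m₁ - z) * ρ z)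
    (φ₁ : ℝ → ℝ)
    (hφ₁ : φ₁ = fun x => (x - m₁) / Real.sqrt (m₂ - m₁ ^ 2)) :
    ∀ x ∈ I, HasDerivAt (fun y => S y * deriv φ₁ y) (-(lam * ρ x * φ₁ x)) x := by
  
  intro x hxI
  set c := Real.sqrt (m₂ - m₁ ^ 2) with hc
  have hcpos : 0 < c := Real.sqrt_pos.mpr hvar
  -- derivative of φ₁ is constant 1/c
  have hφd : ∀ y : ℝ, HasDerivAt φ₁ (1 / c) y := by
    intro y
    rw [hφ₁]
    simpa [div_eq_mul_inv, one_div] using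
      (((hasDerivAt_id y).sub_const m₁).div_const c)
  have hderiv : deriv φ₁ = fun _ => 1 / c := funext fun y => (hφd y).deriv
  -- f is integrable
  have hf : Integrable (fun z => (m₁ - z) * ρ z) := by
    have : (fun z => (m₁ - z) * ρ z) = fun z => m₁ * ρ z - z * ρ z := by
      funext z; ring
    rw [this]
    exact (hρint.const_mul m₁).sub hint1
  -- I is open
  have hIopen : IsOpen I := by
    rw [hI]
    have : {x : ℝ | x₁ < (x : EReal) ∧ (x : EReal) < x₂}
        = (fun x : ℝ => (x : EReal)) ⁻¹' (Set.Ioo x₁ x₂) := rfl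
    rw [this]
    exact isOpen_Ioo.preimage continuous_coe_real_ereal
  have hρcx : ContinuousAt ρ x := hρcont.continuousAt (hIopen.mem_nhds hxI)
  have hfcx : ContinuousAt (fun z => (m₁ - z) * ρ z) x :=
    (continuous_const.sub continuous_id).continuousAt.mul hρcx
  -- rewrite S via interval integral from x
  have hSrw : ∀ y : ℝ, S y
      = lam * ((∫ z in Set.Iic x, (m₁ - z) * ρ z) + ∫ z in x..y, (m₁ - z) * ρ z) := by
    intro y
    rw [hS y]
    congr 1
    rw [← intervalIntegral.integral_Iic_sub_Iic hf.integrableOn hf.integrableOn]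
    have hio : ∀ a : ℝ, (∫ z in Set.Iio a, (m₁ - z) * ρ z)
        = ∫ z in Set.Iic a, (m₁ - z) * ρ z := by
      intro a
      exact (MeasureTheory.integral_Iic_eq_integral_Iio).symm
    rw [hio y]; ring
  -- derivative of interval integral
  have hG : HasDerivAt (fun y => ∫ z in x..y, (m₁ - z) * ρ z) ((m₁ - x) * ρ x) x :=
    intervalIntegral.integral_hasDerivAt_right
      hf.intervalIntegrable
      hf.aestronglyMeasurable.stronglyMeasurableAtFilter
      hfcx
  have hSd : HasDerivAt S (lam * ((m₁ - x) * ρ x)) x := by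
    have := ((hG.const_add (∫ z in Set.Iic x, (m₁ - z) * ρ z)).const_mul lam)
    rw [show S = fun y => lam * ((∫ z in Set.Iic x, (m₁ - z) * ρ z) + ∫ z in x..y, (m₁ - z) * ρ z) from funext hSrw]
    exact this
  have hmain : HasDerivAt (fun y => S y * deriv φ₁ y)
      (lam * ((m₁ - x) * ρ x) * (1 / c)) x := by
    rw [hderiv]
    exact hSd.mul_const _
  convert hmain using 1
  rw [hφ₁]
  field_simp
  ring
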